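/- There exists a constant c > 0 such that for every m ≥ 1, every complex root ζ of the partial sum of the exponential series P_m(z) = Σ_{k=0}^m z^k/k! satisfies c·m ≤ |ζ| ≤ m. -/

import Mathlib

open Finset

lemma szego_succ_term {K : Type*} [Field K] [CharZero K] (k : ℕ) (x : K) :
    ((k+1 : ℕ) : K) * x ^ (k+1) / (k+1).factorial = x ^ (k+1) / k.factorial := by
  have hfac : (((k+1).factorial : K)) = ((k:K)+1) * k.factorial := by
    rw [Nat.factorial_succ]; push_cast; ring
  have h1 : ((k:K)+1) ≠ 0 := by
    have := Nat.cast_ne_zero (R := K).mpr (Nat.succ_ne_zero k)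
    push_cast at this; exact this
  rw [hfac]
  push_cast
  exact mul_div_mul_left _ _ h1

lemma szego_tele {K : Type*} [Field K] [CharZero K] (m : ℕ) (x : K) :
    ∑ k ∈ range (m + 1), ((m : K) - k) * x ^ k / k.factorial
      = ((m : K) - x) * ∑ k ∈ range (m + 1), x ^ k / k.factorial
        + x ^ (m + 1) / m.factorial := by
  have key : ∀ k : ℕ, ((m : K) - k) * x ^ k / k.factorial
      = ((m : K) - x) * (x ^ k / k.factorial)
        + (((k+1 : ℕ) : K) * x ^ (k+1) / (k+1).factorial
            - (k : K) * x ^ k / k.factorial) := by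
    intro k
    rw [szego_succ_term]
    ring
  calc ∑ k ∈ range (m + 1), ((m : K) - k) * x ^ k / k.factorial
      = ∑ k ∈ range (m + 1), (((m : K) - x) * (x ^ k / k.factorial)
          + (((k+1 : ℕ) : K) * x ^ (k+1) / (k+1).factorial
            - (k : K) * x ^ k / k.factorial)) := Finset.sum_congr rfl fun k _ => key k
    _ = ((m : K) - x) * ∑ k ∈ range (m + 1), x ^ k / k.factorial
        + (((m+1 : ℕ) : K) * x ^ (m+1) / (m+1).factorial
            - ((0:ℕ) : K) * x ^ 0 / (0:ℕ).factorial) := by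
        rw [Finset.sum_add_distrib, Finset.mul_sum,
          Finset.sum_range_sub (fun k => ((k : ℕ) : K) * x ^ k / (k : ℕ).factorial)]
    _ = _ := by rw [szego_succ_term m x]; simp

lemma szego_upper (m : ℕ) (hm : 1 ≤ m) (ζ : ℂ)
    (h : ∑ k ∈ range (m + 1), ζ ^ k / (k.factorial : ℂ) = 0) :
    ‖ζ‖ ≤ m := by
  by_contra hlt
  push_neg at hlt
  set r : ℝ := ‖ζ‖ with hr
  have hm0 : (0:ℝ) < m := by exact_mod_cast hm
  have hrm : (m:ℝ) < r := hlt
  have hr0 : 0 < r := lt_trans hm0 hrm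
  have hid : ζ ^ (m+1) / (m.factorial : ℂ)
      = ∑ k ∈ range (m + 1), ((m : ℂ) - k) * ζ ^ k / k.factorial := by
    rw [szego_tele m ζ, h]; ring
  have habs : r ^ (m+1) / (m.factorial : ℝ)
      ≤ ∑ k ∈ range (m + 1), ((m:ℝ) - k) * r ^ k / k.factorial := by
    have h1 : ‖ζ ^ (m+1) / (m.factorial : ℂ)‖ = r ^ (m+1) / m.factorial := by
      rw [norm_div, norm_pow]
      simp [hr]
    calc r ^ (m+1) / (m.factorial : ℝ)
        = ‖∑ k ∈ range (m + 1), ((m : ℂ) - k) * ζ ^ k / k.factorial‖ := by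
          rw [← hid, h1]
      _ ≤ ∑ k ∈ range (m + 1), ‖((m : ℂ) - k) * ζ ^ k / k.factorial‖ :=
          norm_sum_le _ _
      _ = ∑ k ∈ range (m + 1), ((m:ℝ) - k) * r ^ k / k.factorial := by
          refine Finset.sum_congr rfl fun k hk => ?_
          have hk' : k ≤ m := Nat.lt_succ_iff.mp (mem_range.mp hk)
          have hc : ((m : ℂ) - k) = ((m - k : ℕ) : ℂ) := by
            push_cast [Nat.cast_sub hk']; ring
          rw [hc, norm_div, norm_mul, norm_pow, Complex.norm_natCast, Complex.norm_natCast,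
            Nat.cast_sub hk', ← hr]
  set t : ℝ := r / m with ht
  have ht1 : 1 < t := (one_lt_div hm0).mpr hrm
  have hscale : ∑ k ∈ range (m + 1), ((m:ℝ) - k) * r ^ k / k.factorial
      ≤ t ^ m * ∑ k ∈ range (m + 1), ((m:ℝ) - k) * (m:ℝ) ^ k / k.factorial := by
    rw [Finset.mul_sum]
    refine Finset.sum_le_sum fun k hk => ?_
    have hk' : k ≤ m := Nat.lt_succ_iff.mp (mem_range.mp hk)
    have hcoef : (0:ℝ) ≤ (m:ℝ) - k := by
      have : (k:ℝ) ≤ m := by exact_mod_cast hk'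
      linarith
    have hrk : r ^ k ≤ t ^ m * (m:ℝ) ^ k := by
      have hrtm : r = t * m := by rw [ht, div_mul_cancel₀ r hm0.ne']
      rw [hrtm, mul_pow]
      have h2 : t ^ k ≤ t ^ m := pow_le_pow_right₀ (le_of_lt ht1) hk'
      nlinarith [pow_pos (lt_trans one_pos ht1) k, pow_nonneg (le_of_lt hm0) k]
    calc ((m:ℝ) - k) * r ^ k / k.factorial
        ≤ ((m:ℝ) - k) * (t ^ m * (m:ℝ) ^ k) / k.factorial := by gcongr
      _ = t ^ m * (((m:ℝ) - k) * (m:ℝ) ^ k / k.factorial) := by ring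
  have hval : ∑ k ∈ range (m + 1), ((m:ℝ) - k) * (m:ℝ) ^ k / k.factorial
      = (m:ℝ) ^ (m+1) / m.factorial := by
    rw [szego_tele m (m:ℝ)]; ring
  have hfacm : (0:ℝ) < m.factorial := by exact_mod_cast m.factorial_pos
  rw [hval] at hscale
  have hall : r ^ (m+1) / (m.factorial:ℝ) ≤ t ^ m * ((m:ℝ) ^ (m+1) / m.factorial) :=
    le_trans habs hscale
  have hfinal : r ^ (m+1) ≤ t ^ m * (m:ℝ) ^ (m+1) := by
    have h' := mul_le_mul_of_nonneg_right hall hfacm.le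
    calc r ^ (m+1) = r ^ (m+1) / m.factorial * m.factorial := by field_simp
      _ ≤ t ^ m * ((m:ℝ) ^ (m+1) / m.factorial) * m.factorial := h'
      _ = t ^ m * (m:ℝ) ^ (m+1) := by field_simp
  have hre : r ^ (m+1) = t ^ (m+1) * (m:ℝ) ^ (m+1) := by
    rw [ht, div_pow]; field_simp
  rw [hre] at hfinal
  have hmp : (0:ℝ) < (m:ℝ) ^ (m+1) := pow_pos hm0 _
  have h2 : t ^ (m+1) ≤ t ^ m := le_of_mul_le_mul_right hfinal hmp
  have h3 : t ^ m < t ^ (m+1) := pow_lt_pow_right₀ ht1 (Nat.lt_succ_self m)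
  linarith

lemma szego_lower (m : ℕ) (hm : 1 ≤ m) (ζ : ℂ)
    (h : ∑ k ∈ range (m + 1), ζ ^ k / (k.factorial : ℂ) = 0) :
    (1/10 : ℝ) * m ≤ ‖ζ‖ := by
  by_contra hlt
  push_neg at hlt
  set r : ℝ := ‖ζ‖ with hr
  have hr0 : 0 ≤ r := norm_nonneg ζ
  have hm0 : (0:ℝ) < m := by exact_mod_cast hm
  have hrm : r < m / 10 := by linarith
  -- exp ζ equals the tail
  have hsum : Summable (fun k : ℕ => ζ ^ k / (k.factorial : ℂ)) :=
    NormedSpace.expSeries_div_summable ζ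
  have hexp : Complex.exp ζ = ∑' k : ℕ, ζ ^ (k + (m+1)) / ((k + (m+1)).factorial : ℂ) := by
    have h0 : Complex.exp ζ = ∑' k : ℕ, ζ ^ k / (k.factorial : ℂ) := by
      rw [Complex.exp_eq_exp_ℂ, NormedSpace.exp_eq_tsum_div]
    have h1 := Summable.sum_add_tsum_nat_add (f := fun k : ℕ => ζ ^ k / (k.factorial : ℂ)) (m+1) hsum
    rw [h0, ← h1, h, zero_add]
  -- bound the tail terms
  have hterm : ∀ k : ℕ, ‖ζ ^ (k + (m+1)) / ((k + (m+1)).factorial : ℂ)‖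
      ≤ r ^ (m+1) / ((m+1).factorial : ℝ) * (1/10) ^ k := by
    intro k
    have hfac : ((m+1).factorial : ℝ) * ((m+2) : ℝ) ^ k ≤ ((m + 1 + k).factorial : ℝ) := by
      exact_mod_cast Nat.factorial_mul_pow_le_factorial (m := m + 1) (n := k)
    have habs : ‖ζ ^ (k + (m+1)) / ((k + (m+1)).factorial : ℂ)‖
        = r ^ (k + (m+1)) / ((k + (m+1)).factorial : ℝ) := by
      rw [norm_div, norm_pow, Complex.norm_natCast, ← hr]
    rw [habs]
    have hkm : k + (m+1) = m + 1 + k := by ring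
    rw [hkm]
    have hrk : r ^ k ≤ ((m+2 : ℝ) / 10) ^ k := by
      apply pow_le_pow_left₀ hr0
      linarith
    calc r ^ (m + 1 + k) / ((m + 1 + k).factorial : ℝ)
        ≤ r ^ (m + 1 + k) / (((m+1).factorial : ℝ) * ((m+2) : ℝ) ^ k) := by
          apply div_le_div_of_nonneg_left (pow_nonneg hr0 _) _ hfac
          positivity
      _ = r ^ (m+1) * r ^ k / (((m+1).factorial : ℝ) * ((m+2) : ℝ) ^ k) := by
          rw [pow_add]
      _ ≤ r ^ (m+1) * ((m+2 : ℝ) / 10) ^ k / (((m+1).factorial : ℝ) * ((m+2) : ℝ) ^ k) := by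
          gcongr
      _ = r ^ (m+1) / ((m+1).factorial : ℝ) * (1/10) ^ k := by
          rw [div_pow]
          have h2 : ((m+2):ℝ) ^ k ≠ 0 := by positivity
          have h3 : ((m+1).factorial : ℝ) ≠ 0 := by
            exact_mod_cast (m+1).factorial_ne_zero
          field_simp
          rw [mul_assoc, ← mul_pow]; norm_num
  have hgeom : Summable (fun k : ℕ => r ^ (m+1) / ((m+1).factorial : ℝ) * (1/10) ^ k) :=
    (summable_geometric_of_lt_one (by norm_num) (by norm_num)).mul_left _
  have htail : Summable (fun k : ℕ => ‖ζ ^ (k + (m+1)) / ((k + (m+1)).factorial : ℂ)‖) :=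
    Summable.of_nonneg_of_le (fun k => norm_nonneg _) hterm hgeom
  have hbound : ‖Complex.exp ζ‖ ≤ r ^ (m+1) / ((m+1).factorial : ℝ) * (10/9) := by
    rw [hexp]
    calc ‖∑' k : ℕ, ζ ^ (k + (m+1)) / ((k + (m+1)).factorial : ℂ)‖
        ≤ ∑' k : ℕ, ‖ζ ^ (k + (m+1)) / ((k + (m+1)).factorial : ℂ)‖ :=
          norm_tsum_le_tsum_norm htail
      _ ≤ ∑' k : ℕ, r ^ (m+1) / ((m+1).factorial : ℝ) * (1/10) ^ k :=
          Summable.tsum_le_tsum hterm htail hgeom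
      _ = r ^ (m+1) / ((m+1).factorial : ℝ) * (10/9) := by
          rw [tsum_mul_left, tsum_geometric_of_lt_one (by norm_num) (by norm_num)]
          norm_num
  -- lower bound on |exp ζ|
  have hlow : Real.exp (-r) ≤ ‖Complex.exp ζ‖ := by
    rw [Complex.norm_exp]
    apply Real.exp_le_exp.mpr
    have h2 : -‖ζ‖ ≤ ζ.re := (abs_le.1 (Complex.abs_re_le_norm ζ)).1
    rw [← hr] at h2
    linarith
  -- numeric estimates
  have e1 : Real.exp 1 < 2.7182818286 := Real.exp_one_lt_d9
  have e0 : (0:ℝ) < Real.exp 1 := Real.exp_pos 1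
  have hexp110 : Real.exp (1/10) ≤ 10/9 := by
    have h9 : (9/10 : ℝ) ≤ Real.exp (-(1/10)) := by
      have := Real.add_one_le_exp (-(1/10) : ℝ)
      linarith
    have hpos : (0:ℝ) < Real.exp (-(1/10)) := Real.exp_pos _
    have hinv : Real.exp (1/10) = (Real.exp (-(1/10)))⁻¹ := by
      rw [Real.exp_neg, inv_inv]
    rw [hinv]
    rw [inv_le_comm₀ hpos (by norm_num)]
    linarith
  have hq : Real.exp 1 / 10 * Real.exp (1/10) ≤ 1/3 := by
    nlinarith [Real.exp_pos (1/10 : ℝ)]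
  have hqm : (Real.exp 1 / 10 * Real.exp (1/10)) ^ m ≤ 1/3 := by
    calc (Real.exp 1 / 10 * Real.exp (1/10)) ^ m ≤ (1/3 : ℝ) ^ m :=
          pow_le_pow_left₀ (by positivity) hq m
      _ ≤ (1/3 : ℝ) ^ 1 := pow_le_pow_of_le_one (by norm_num) (by norm_num) hm
      _ = 1/3 := by norm_num
  have hnum : (10/9 : ℝ) * (Real.exp 1 / 10) ^ (m+1) * Real.exp ((m:ℝ)/10) < 1 := by
    have hm10 : Real.exp ((m:ℝ)/10) = Real.exp (1/10) ^ m := by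
      rw [show ((m:ℝ)/10) = (m : ℕ) * (1/10 : ℝ) by push_cast; ring, Real.exp_nat_mul]
    rw [hm10, pow_succ']
    have expand : (10/9 : ℝ) * (Real.exp 1 / 10 * (Real.exp 1 / 10) ^ m) * Real.exp (1/10) ^ m
        = (10/9) * (Real.exp 1 / 10) * ((Real.exp 1 / 10 * Real.exp (1/10)) ^ m) := by
      rw [mul_pow]; ring
    rw [expand]
    nlinarith [pow_nonneg (show (0:ℝ) ≤ Real.exp 1 / 10 * Real.exp (1/10) by positivity) m]
  -- pow/factorial bound
  have hpf : ((m+1:ℝ)) ^ (m+1) / ((m+1).factorial : ℝ) ≤ Real.exp 1 ^ (m+1) := by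
    have h2 := Real.pow_div_factorial_le_exp (x := ((m+1 : ℕ):ℝ)) (by positivity) (m+1)
    calc ((m+1:ℝ)) ^ (m+1) / ((m+1).factorial : ℝ)
        = ((m+1:ℕ):ℝ) ^ (m+1) / ((m+1).factorial : ℝ) := by push_cast; ring_nf
      _ ≤ Real.exp ((m+1:ℕ):ℝ) := h2
      _ = Real.exp 1 ^ (m+1) := by
          rw [← Real.exp_nat_mul]; norm_num
  have hfp : (0:ℝ) < ((m+1).factorial : ℝ) := by exact_mod_cast (m+1).factorial_pos
  have step1 : r ^ (m+1) / ((m+1).factorial : ℝ) * (10/9)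
      ≤ (10/9) * (Real.exp 1 / 10) ^ (m+1) := by
    have hr' : r ^ (m+1) ≤ ((m+1:ℝ)/10) ^ (m+1) := by
      apply pow_le_pow_left₀ hr0
      linarith
    calc r ^ (m+1) / ((m+1).factorial : ℝ) * (10/9)
        ≤ ((m+1:ℝ)/10) ^ (m+1) / ((m+1).factorial : ℝ) * (10/9) := by gcongr
      _ = ((m+1:ℝ)) ^ (m+1) / ((m+1).factorial : ℝ) * (1/10) ^ (m+1) * (10/9) := by
          simp only [div_pow, one_pow]; generalize (10:ℝ) ^ (m+1) = T; ring
      _ ≤ Real.exp 1 ^ (m+1) * (1/10) ^ (m+1) * (10/9) := by gcongr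
      _ = (10/9) * (Real.exp 1 / 10) ^ (m+1) := by
          simp only [div_pow, one_pow]; generalize (10:ℝ) ^ (m+1) = T; ring
  have step2 : (10/9 : ℝ) * (Real.exp 1 / 10) ^ (m+1) < Real.exp (-((m:ℝ)/10)) := by
    have hpos : (0:ℝ) < Real.exp ((m:ℝ)/10) := Real.exp_pos _
    rw [Real.exp_neg, ← one_div, lt_div_iff₀ hpos]
    exact hnum
  have step3 : Real.exp (-((m:ℝ)/10)) < Real.exp (-r) := by
    apply Real.exp_lt_exp.mpr
    linarith
  linarith [le_trans hlow hbound]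


open Polynomial

/-- **Lemma 12 (Szegő).**  There is a constant `c > 0` such that for every `m ≥ 1`, every
complex root `ζ` of the partial sum `P_m(z) = ∑_{k=0}^m z^k / k!` of the exponential
series satisfies `c m ≤ |ζ| ≤ m`. -/
theorem szego_roots_of_exp_partial_sums :
    ∃ c : ℝ, 0 < c ∧ ∀ m : ℕ, 1 ≤ m →
      ∀ ζ ∈ (∑ k ∈ Finset.range (m + 1),
          Polynomial.C (((k.factorial : ℂ))⁻¹) * Polynomial.X ^ k).roots,
        c * m ≤ ‖ζ‖ ∧ ‖ζ‖ ≤ m := by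
  refine ⟨1/10, by norm_num, fun m hm ζ hζ => ?_⟩
  rw [Polynomial.mem_roots'] at hζ
  have heval : ∑ k ∈ Finset.range (m + 1), ζ ^ k / (k.factorial : ℂ) = 0 := by
    have h2 := hζ.2
    rw [Polynomial.IsRoot, Polynomial.eval_finset_sum] at h2
    rw [← h2]
    refine Finset.sum_congr rfl fun k _ => ?_
    rw [Polynomial.eval_mul, Polynomial.eval_C, Polynomial.eval_pow, Polynomial.eval_X,
      div_eq_mul_inv, mul_comm]
  exact ⟨szego_lower m hm ζ heval, szego_upper m hm ζ heval⟩
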